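/- Let H be a real Hilbert space and let T be a bounded linear operator on H such that M_T = S_{H₀} for some finite dimensional subspace H₀ of H and sup{‖Tz‖ : z ∈ H₀^⊥, ‖z‖ = 1} < ‖T‖. Then for every bounded linear operator A on H and every ε ∈ [0,1), if T ⊥_B^ε A then there exists x ∈ M_T such that |⟨Tx, Ax⟩| ≤ ε‖T‖‖A‖. -/

import Mathlib

open RealInnerProductSpace

private lemma exists_pos_le₂ (a b : ℝ) (ha : 0 < a) (hb : 0 < b) :
    ∃ l : ℝ, 0 < l ∧ l ≤ a ∧ l ≤ b :=
  ⟨min a b, lt_min ha hb, min_le_left _ _, min_le_right _ _⟩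

private lemma exists_pos_le₄ (a b c d : ℝ) (ha : 0 < a) (hb : 0 < b) (hc : 0 < c)
    (hd : 0 < d) : ∃ l : ℝ, 0 < l ∧ l ≤ a ∧ l ≤ b ∧ l ≤ c ∧ l ≤ d := by
  obtain ⟨l₁, hl₁, h₁a, h₁b⟩ := exists_pos_le₂ a b ha hb
  obtain ⟨l₂, hl₂, h₂c, h₂d⟩ := exists_pos_le₂ c d hc hd
  obtain ⟨l, hl, hla, hlb⟩ := exists_pos_le₂ l₁ l₂ hl₁ hl₂
  exact ⟨l, hl, hla.trans h₁a, hla.trans h₁b, hlb.trans h₂c, hlb.trans h₂d⟩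

set_option maxHeartbeats 1000000 in
private lemma key_contra
    {H : Type*} [NormedAddCommGroup H] [InnerProductSpace ℝ H] [CompleteSpace H]
    (T A : H →L[ℝ] H) (H₀ : Submodule ℝ H) [FiniteDimensional ℝ H₀]
    (k' : ℝ) (hk'0 : 0 ≤ k') (hk'N : k' < ‖T‖)
    (hk' : ∀ z ∈ H₀ᗮ, ‖T z‖ ≤ k' * ‖z‖)
    (hortho : ∀ u ∈ H₀, ∀ v ∈ H₀ᗮ, ⟪T u, T v⟫ = 0)
    (ε : ℝ) (hε0 : 0 ≤ ε)
    (horth : ∀ l : ℝ, ‖T + l • A‖ ^ 2 ≥ ‖T‖ ^ 2 - 2 * ε * ‖T‖ * ‖l • A‖)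
    (hne : ∃ x : H, x ∈ H₀ ∧ ‖x‖ = 1)
    (h : ∀ x : H, x ∈ H₀ → ‖x‖ = 1 → ⟪T x, A x⟫ < -(ε * ‖T‖ * ‖A‖)) : False := by
  classical
  have hN : 0 < ‖T‖ := lt_of_le_of_lt hk'0 hk'N
  have hB : 0 ≤ ‖A‖ := norm_nonneg _
  have hc : 0 ≤ ε * ‖T‖ * ‖A‖ := by positivity
  have hfc : Continuous fun x : H => ⟪T x, A x⟫ := T.continuous.inner A.continuous
  have hSne : Set.Nonempty {x : H | x ∈ H₀ ∧ ‖x‖ = 1} := by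
    obtain ⟨x, hx, h1⟩ := hne; exact ⟨x, hx, h1⟩
  have hScpt : IsCompact {x : H | x ∈ H₀ ∧ ‖x‖ = 1} := by
    have h1 : IsCompact ((Subtype.val : H₀ → H) '' Metric.sphere (0 : H₀) 1) :=
      (isCompact_sphere (0 : H₀) 1).image continuous_subtype_val
    have h2 : {x : H | x ∈ H₀ ∧ ‖x‖ = 1} = (Subtype.val : H₀ → H) '' Metric.sphere (0 : H₀) 1 := by
      ext x
      simp only [Set.mem_image, Metric.mem_sphere, dist_zero_right, Set.mem_setOf_eq]
      constructor
      · rintro ⟨hx, hx1⟩; exact ⟨⟨x, hx⟩, by simpa using hx1, rfl⟩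
      · rintro ⟨⟨y, hy⟩, hy1, rfl⟩; exact ⟨hy, by simpa using hy1⟩
    rwa [h2]
  obtain ⟨x₀, hx₀S, hx₀max⟩ := hScpt.exists_isMaxOn hSne hfc.continuousOn
  obtain ⟨δ, hδ, hfS⟩ :
      ∃ δ : ℝ, 0 < δ ∧ ∀ x : H, x ∈ H₀ → ‖x‖ = 1 → ⟪T x, A x⟫ ≤ -(ε * ‖T‖ * ‖A‖ + δ) := by
    refine ⟨-(ε * ‖T‖ * ‖A‖) - ⟪T x₀, A x₀⟫, by linarith [h x₀ hx₀S.1 hx₀S.2], ?_⟩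
    intro x hx h1
    have h2 := hx₀max (show x ∈ {x : H | x ∈ H₀ ∧ ‖x‖ = 1} from ⟨hx, h1⟩)
    simp only [Set.mem_setOf_eq] at h2
    linarith
  obtain ⟨ρ, hρ0, hρhalf, hρ2⟩ :=
    exists_pos_le₂ (1/2) (δ/(8*‖T‖*‖A‖+1)) (by norm_num) (by positivity)
  have hρδ : 4*‖T‖*‖A‖*ρ ≤ δ/2 := by
    rw [le_div_iff₀ (by positivity)] at hρ2
    linarith
  have hNk2 : 0 < ‖T‖^2 - k'^2 := by
    have := pow_lt_pow_left₀ hk'N hk'0 two_ne_zero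
    linarith
  obtain ⟨η, hη, hηle⟩ : ∃ η : ℝ, 0 < η ∧ η ≤ (‖T‖^2 - k'^2) * ρ^2 :=
    ⟨(‖T‖^2 - k'^2) * ρ^2, by positivity, le_rfl⟩
  obtain ⟨lam, hlam0, hlam1, h₂, h₃, h₄⟩ :=
    exists_pos_le₄ 1 (δ/(2*(‖A‖^2+1)))
      (η/(2*‖T‖*‖A‖+‖A‖^2+2*(ε*‖T‖*‖A‖)+δ/2+1))
      (‖T‖^2/(2*(2*(ε*‖T‖*‖A‖)+δ)+1))
      one_pos (by positivity) (by positivity) (by positivity)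
  have hlamB : lam * ‖A‖^2 ≤ δ/2 := by
    rw [le_div_iff₀ (by positivity)] at h₂
    linarith
  have hlamη : lam * (2*‖T‖*‖A‖ + ‖A‖^2 + 2*(ε*‖T‖*‖A‖) + δ/2) ≤ η := by
    rw [le_div_iff₀ (by positivity)] at h₃
    linarith
  have hlamN : lam * (2*(ε*‖T‖*‖A‖) + δ) ≤ ‖T‖^2/2 := by
    rw [le_div_iff₀ (by positivity)] at h₄
    linarith
  have hpt : ∀ x : H, ‖x‖ = 1 →
      ‖(T + lam • A) x‖ ^ 2 ≤ ‖T‖^2 - 2*lam*(ε*‖T‖*‖A‖) - lam*δ/2 := by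
    intro x hx1
    obtain ⟨u, huH, v, hvH, hxuv⟩ :
        ∃ u, u ∈ H₀ ∧ ∃ v, v ∈ H₀ᗮ ∧ x = u + v := by
      refine ⟨(H₀.orthogonalProjectionOnto x : H), (H₀.orthogonalProjectionOnto x).2,
        x - (H₀.orthogonalProjectionOnto x : H), H₀.sub_starProjection_mem_orthogonal x, by abel⟩
    have huv : ⟪u, v⟫ = 0 := Submodule.inner_right_of_mem_orthogonal huH hvH
    have hnorm2 : ‖u‖^2 + ‖v‖^2 = 1 := by
      have h2 := norm_add_sq_real u v
      rw [← hxuv, hx1, huv] at h2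
      linarith [h2]
    have hAx : ‖A x‖ ≤ ‖A‖ := by simpa [hx1] using A.le_opNorm x
    have hTx : ‖T x‖ ≤ ‖T‖ := by simpa [hx1] using T.le_opNorm x
    have hexp : ‖(T + lam • A) x‖^2 = ‖T x‖^2 + 2*lam*⟪T x, A x⟫ + lam^2*‖A x‖^2 := by
      have he : (T + lam • A) x = T x + lam • (A x) := by
        simp [ContinuousLinearMap.add_apply, ContinuousLinearMap.smul_apply]
      rw [he, norm_add_sq_real, real_inner_smul_right, norm_smul, Real.norm_eq_abs,
        mul_pow, sq_abs]
      ring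
    have hTxsq : ‖T x‖^2 ≤ ‖T‖^2 := by
      have := pow_le_pow_left₀ (norm_nonneg (T x)) hTx 2
      linarith
    by_cases hcase : ‖v‖ ≤ ρ
    · -- near case
      have hu1 : ‖u‖ ≤ 1 := by
        have h1 : ‖u‖^2 ≤ 1 := by linarith [sq_nonneg ‖v‖]
        exact (pow_le_one_iff_of_nonneg (norm_nonneg u) two_ne_zero).mp h1
      have hv2 : ‖v‖^2 ≤ ρ^2 := pow_le_pow_left₀ (norm_nonneg v) hcase 2
      have hρ2' : ρ^2 ≤ ρ*(1/2) := by
        have h1 : ρ*ρ ≤ ρ*(1/2) := mul_le_mul_of_nonneg_left hρhalf hρ0.le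
        calc ρ^2 = ρ*ρ := sq ρ
          _ ≤ ρ*(1/2) := h1
      have hu_pos : 0 < ‖u‖ := by
        rw [norm_pos_iff]
        intro h0
        rw [h0, norm_zero] at hnorm2
        have : ρ * (1/2) ≤ (1/2) * (1/2) := by
          have := mul_le_mul_of_nonneg_right hρhalf (by norm_num : (0:ℝ) ≤ 1/2)
          linarith
        linarith [hv2, hρ2']
      obtain ⟨w, hwH, hw1, huw⟩ :
          ∃ w : H, w ∈ H₀ ∧ ‖w‖ = 1 ∧ ‖u - w‖ = 1 - ‖u‖ := by
        refine ⟨‖u‖⁻¹ • u, H₀.smul_mem _ huH, ?_, ?_⟩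
        · rw [norm_smul, norm_inv, norm_norm, inv_mul_cancel₀ hu_pos.ne']
        · have e1 : u - ‖u‖⁻¹ • u = (1 - ‖u‖⁻¹) • u := by rw [sub_smul, one_smul]
          have hinv : (1:ℝ) ≤ ‖u‖⁻¹ := by
            have h1 : (1:ℝ) ≤ 1/‖u‖ := by
              rw [le_div_iff₀ hu_pos]
              linarith
            rwa [one_div] at h1
          rw [e1, norm_smul, Real.norm_eq_abs, abs_of_nonpos (by linarith)]
          field_simp
          ring
      have hxw : ‖x - w‖ ≤ 2*ρ := by
        have e1 : x - w = v + (u - w) := by rw [hxuv]; abel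
        have h3 : 1 - ‖u‖ ≤ ‖v‖^2 := by
          have t1 : 0 ≤ ‖u‖*(1-‖u‖) := mul_nonneg (norm_nonneg u) (by linarith)
          linarith [t1, hnorm2]
        have h4 := norm_add_le v (u - w)
        rw [← e1, huw] at h4
        linarith [hv2, hρ2', hρ0]
      have hfw : ⟪T w, A w⟫ ≤ -(ε*‖T‖*‖A‖ + δ) := hfS w hwH hw1
      have hfxw : ⟪T x, A x⟫ - ⟪T w, A w⟫ ≤ 2*‖T‖*‖A‖*‖x - w‖ := by
        have e1 : ⟪T x, A x⟫ - ⟪T w, A w⟫ = ⟪T (x - w), A x⟫ + ⟪T w, A (x - w)⟫ := by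
          simp only [map_sub, inner_sub_left, inner_sub_right]
          ring
        have i1 := real_inner_le_norm (T (x - w)) (A x)
        have i2 := real_inner_le_norm (T w) (A (x - w))
        have n1 := T.le_opNorm (x - w)
        have n2 := A.le_opNorm (x - w)
        have hTw : ‖T w‖ ≤ ‖T‖ := by simpa [hw1] using T.le_opNorm w
        have j1 : ‖T (x - w)‖ * ‖A x‖ ≤ (‖T‖ * ‖x - w‖) * ‖A‖ :=
          mul_le_mul n1 hAx (norm_nonneg _) (by positivity)
        have j2 : ‖T w‖ * ‖A (x - w)‖ ≤ ‖T‖ * (‖A‖ * ‖x - w‖) :=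
          mul_le_mul hTw n2 (norm_nonneg _) hN.le
        rw [e1]
        linarith
      have hfx : ⟪T x, A x⟫ ≤ -(ε*‖T‖*‖A‖ + δ/2) := by
        have h5 : 2*‖T‖*‖A‖*‖x - w‖ ≤ 2*‖T‖*‖A‖*(2*ρ) :=
          mul_le_mul_of_nonneg_left hxw (by positivity)
        linarith
      have h6 : lam^2*‖A x‖^2 ≤ lam*(δ/2) := by
        have hAxsq : ‖A x‖^2 ≤ ‖A‖^2 := pow_le_pow_left₀ (norm_nonneg (A x)) hAx 2
        have q1 : lam^2*‖A x‖^2 ≤ lam^2*‖A‖^2 :=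
          mul_le_mul_of_nonneg_left hAxsq (sq_nonneg lam)
        have q2 : lam*(lam*‖A‖^2) ≤ lam*(δ/2) := mul_le_mul_of_nonneg_left hlamB hlam0.le
        linarith
      have h7 : 2*lam*⟪T x, A x⟫ ≤ 2*lam*(-(ε*‖T‖*‖A‖ + δ/2)) :=
        mul_le_mul_of_nonneg_left hfx (by positivity)
      rw [hexp]
      linarith
    · -- far case
      push_neg at hcase
      have hTx2 : ‖T x‖^2 ≤ ‖T‖^2 - η := by
        have e1 : ‖T x‖^2 = ‖T u‖^2 + ‖T v‖^2 := by
          have hz := hortho u huH v hvH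
          rw [hxuv, map_add, norm_add_sq_real, hz]
          ring
        have b1 : ‖T u‖ ≤ ‖T‖ * ‖u‖ := T.le_opNorm u
        have b2 : ‖T v‖ ≤ k' * ‖v‖ := hk' v hvH
        have s1 : ‖T u‖^2 ≤ (‖T‖*‖u‖)^2 := pow_le_pow_left₀ (norm_nonneg (T u)) b1 2
        have s2 : ‖T v‖^2 ≤ (k'*‖v‖)^2 := pow_le_pow_left₀ (norm_nonneg (T v)) b2 2
        rw [mul_pow] at s1 s2
        have s3 : ρ^2 ≤ ‖v‖^2 := pow_le_pow_left₀ hρ0.le hcase.le 2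
        have s4 : (‖T‖^2 - k'^2)*ρ^2 ≤ (‖T‖^2 - k'^2)*‖v‖^2 :=
          mul_le_mul_of_nonneg_left s3 hNk2.le
        have s5 : ‖T‖^2*‖u‖^2 + ‖T‖^2*‖v‖^2 = ‖T‖^2 := by
          rw [← mul_add, hnorm2, mul_one]
        rw [e1]
        linarith [s1, s2, s4, s5, hηle]
      have hbound : ‖(T + lam • A) x‖ ≤ ‖T x‖ + lam * ‖A‖ := by
        have he : (T + lam • A) x = T x + lam • (A x) := by
          simp [ContinuousLinearMap.add_apply, ContinuousLinearMap.smul_apply]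
        have h7 : ‖lam • A x‖ ≤ lam * ‖A‖ := by
          rw [norm_smul, Real.norm_eq_abs, abs_of_pos hlam0]
          exact mul_le_mul_of_nonneg_left hAx hlam0.le
        rw [he]
        linarith [norm_add_le (T x) (lam • A x)]
      have hsq2 : ‖(T + lam • A) x‖^2 ≤ (‖T x‖ + lam * ‖A‖)^2 :=
        pow_le_pow_left₀ (norm_nonneg _) hbound 2
      have h8 : 2*(lam*‖A‖)*‖T x‖ ≤ 2*(lam*‖A‖)*‖T‖ :=
        mul_le_mul_of_nonneg_left hTx (by positivity)
      have h9 : lam*lam*‖A‖^2 ≤ lam*1*‖A‖^2 :=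
        mul_le_mul_of_nonneg_right
          (mul_le_mul_of_nonneg_left hlam1 hlam0.le) (sq_nonneg ‖A‖)
      linarith [hsq2, hTx2, h8, h9, hlamη]
  have hD : (0:ℝ) ≤ ‖T‖^2 - 2*lam*(ε*‖T‖*‖A‖) - lam*δ/2 := by
    linarith [hlamN, mul_pos hlam0 hδ, sq_nonneg ‖T‖]
  have hop : ‖T + lam • A‖ ≤ Real.sqrt (‖T‖^2 - 2*lam*(ε*‖T‖*‖A‖) - lam*δ/2) := by
    apply ContinuousLinearMap.opNorm_le_of_unit_norm (Real.sqrt_nonneg _)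
    intro x hx
    exact Real.le_sqrt_of_sq_le (hpt x hx)
  have hsq : ‖T + lam • A‖^2 ≤ ‖T‖^2 - 2*lam*(ε*‖T‖*‖A‖) - lam*δ/2 := by
    have h1 := pow_le_pow_left₀ (norm_nonneg _) hop 2
    rwa [Real.sq_sqrt hD] at h1
  have hfinal := horth lam
  have hnlam : ‖lam • A‖ = lam * ‖A‖ := by
    rw [norm_smul lam A, Real.norm_eq_abs, abs_of_pos hlam0]
  rw [hnlam] at hfinal
  linarith [hfinal, hsq, mul_pos hlam0 hδ]

set_option maxHeartbeats 1000000 in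
/-- If `T` is a bounded operator on a real Hilbert space whose norm attainment set
is the unit sphere of a finite dimensional subspace `H₀` and the norm of `T`
restricted to `H₀ᗮ` is strictly smaller than `‖T‖`, then `T ⊥_B^ε A` implies the
existence of a norm attaining unit vector `x` with `|⟨Tx, Ax⟩| ≤ ε‖T‖‖A‖`. -/
theorem exists_inner_le_of_approx_B_orth
    {H : Type*} [NormedAddCommGroup H] [InnerProductSpace ℝ H] [CompleteSpace H]
    (T : H →L[ℝ] H) (H₀ : Submodule ℝ H) [FiniteDimensional ℝ H₀]
    (hMT : {x : H | ‖x‖ = 1 ∧ ‖T x‖ = ‖T‖} = {x : H | x ∈ H₀ ∧ ‖x‖ = 1})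
    (hsup : sSup {r : ℝ | ∃ z ∈ H₀ᗮ, ‖z‖ = 1 ∧ r = ‖T z‖} < ‖T‖)
    (A : H →L[ℝ] H) (ε : ℝ) (hε0 : 0 ≤ ε) (hε1 : ε < 1)
    (horth : ∀ l : ℝ, ‖T + l • A‖ ^ 2 ≥ ‖T‖ ^ 2 - 2 * ε * ‖T‖ * ‖l • A‖) :
    ∃ x : H, ‖x‖ = 1 ∧ ‖T x‖ = ‖T‖ ∧ |⟪T x, A x⟫| ≤ ε * ‖T‖ * ‖A‖ := by
  classical
  have hmem : ∀ x : H, (‖x‖ = 1 ∧ ‖T x‖ = ‖T‖) ↔ (x ∈ H₀ ∧ ‖x‖ = 1) :=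
    fun x => Set.ext_iff.mp hMT x
  have hattain : ∀ x : H, x ∈ H₀ → ‖x‖ = 1 → ‖T x‖ = ‖T‖ :=
    fun x hx h1 => ((hmem x).mpr ⟨hx, h1⟩).2
  -- basic facts about the supremum over the orthogonal complement
  have hbdd : BddAbove {r : ℝ | ∃ z ∈ H₀ᗮ, ‖z‖ = 1 ∧ r = ‖T z‖} := by
    refine ⟨‖T‖, ?_⟩
    rintro r ⟨z, hz, hz1, rfl⟩
    simpa [hz1] using T.le_opNorm z
  have hN : 0 < ‖T‖ := by
    rcases Set.eq_empty_or_nonempty {r : ℝ | ∃ z ∈ H₀ᗮ, ‖z‖ = 1 ∧ r = ‖T z‖} with he | hn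
    · rw [he, Real.sSup_empty] at hsup
      exact hsup
    · obtain ⟨r, z, hzH, hz1, rfl⟩ := hn
      have h1 : ‖T z‖ ≤ sSup {r : ℝ | ∃ z ∈ H₀ᗮ, ‖z‖ = 1 ∧ r = ‖T z‖} :=
        le_csSup hbdd ⟨z, hzH, hz1, rfl⟩
      linarith [norm_nonneg (T z)]
  set k' := max (sSup {r : ℝ | ∃ z ∈ H₀ᗮ, ‖z‖ = 1 ∧ r = ‖T z‖}) 0 with hk'def
  have hk'0 : 0 ≤ k' := le_max_right _ _
  have hk'N : k' < ‖T‖ := max_lt hsup hN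
  have hk' : ∀ z ∈ H₀ᗮ, ‖T z‖ ≤ k' * ‖z‖ := by
    intro z hz
    rcases eq_or_ne z 0 with rfl | hz0
    · simp
    have hzn : ‖z‖ ≠ 0 := norm_ne_zero_iff.mpr hz0
    have h1 : ‖T (‖z‖⁻¹ • z)‖ ≤ sSup {r : ℝ | ∃ z ∈ H₀ᗮ, ‖z‖ = 1 ∧ r = ‖T z‖} :=
      le_csSup hbdd ⟨‖z‖⁻¹ • z, H₀ᗮ.smul_mem _ hz,
        by rw [norm_smul, norm_inv, norm_norm, inv_mul_cancel₀ hzn], rfl⟩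
    rw [map_smul, norm_smul, norm_inv, norm_norm] at h1
    have h2 := mul_le_mul_of_nonneg_left h1 (norm_nonneg z)
    have h3 : ‖z‖ * (‖z‖⁻¹ * ‖T z‖) = ‖T z‖ := by
      field_simp
    rw [h3] at h2
    calc ‖T z‖ ≤ ‖z‖ * sSup {r : ℝ | ∃ z ∈ H₀ᗮ, ‖z‖ = 1 ∧ r = ‖T z‖} := h2
      _ ≤ ‖z‖ * k' := mul_le_mul_of_nonneg_left (le_max_left _ _) (norm_nonneg z)
      _ = k' * ‖z‖ := mul_comm _ _
  -- the unit sphere of H₀ is nonempty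
  have hne : ∃ x : H, x ∈ H₀ ∧ ‖x‖ = 1 := by
    have hbot : H₀ ≠ ⊥ := by
      intro hb
      have hall : ∀ z : H, z ∈ H₀ᗮ := by
        rw [hb, Submodule.bot_orthogonal_eq_top]
        intro z
        trivial
      have h1 : ‖T‖ ≤ k' := T.opNorm_le_bound hk'0 fun z => hk' z (hall z)
      linarith
    obtain ⟨x, hxH, hx0⟩ := Submodule.exists_mem_ne_zero_of_ne_bot hbot
    have hxn : ‖x‖ ≠ 0 := norm_ne_zero_iff.mpr hx0
    exact ⟨‖x‖⁻¹ • x, H₀.smul_mem _ hxH,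
      by rw [norm_smul, norm_inv, norm_norm, inv_mul_cancel₀ hxn]⟩
  -- orthogonality of T H₀ and T H₀ᗮ
  have hortho : ∀ u ∈ H₀, ∀ v ∈ H₀ᗮ, ⟪T u, T v⟫ = 0 := by
    intro u huH v hvH
    rcases eq_or_ne u 0 with rfl | hu0
    · simp
    have hun : ‖u‖ ≠ 0 := norm_ne_zero_iff.mpr hu0
    obtain ⟨w, hwH, hw1, hu_eq⟩ :
        ∃ w : H, w ∈ H₀ ∧ ‖w‖ = 1 ∧ u = ‖u‖ • w := by
      refine ⟨‖u‖⁻¹ • u, H₀.smul_mem _ huH, ?_, ?_⟩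
      · rw [norm_smul, norm_inv, norm_norm, inv_mul_cancel₀ hun]
      · rw [smul_smul, mul_inv_cancel₀ hun, one_smul]
    have hTw : ‖T w‖ = ‖T‖ := hattain _ hwH hw1
    have hwv : ⟪w, v⟫ = 0 := Submodule.inner_right_of_mem_orthogonal hwH hvH
    have key : ∀ θ : ℝ, 2*θ*⟪T w, T v⟫ ≤ θ^2 * (‖T‖^2 * ‖v‖^2) := by
      intro θ
      have h1 : ‖T (w + θ • v)‖ ≤ ‖T‖ * ‖w + θ • v‖ := T.le_opNorm _
      have h1' : ‖T (w + θ • v)‖^2 ≤ ‖T‖^2 * ‖w + θ • v‖^2 := by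
        have h2 := pow_le_pow_left₀ (norm_nonneg _) h1 2
        rwa [mul_pow] at h2
      have h2 : ‖w + θ • v‖^2 = 1 + θ^2 * ‖v‖^2 := by
        rw [norm_add_sq_real, real_inner_smul_right, hwv, hw1, norm_smul, Real.norm_eq_abs,
          mul_pow, sq_abs]
        ring
      have h3 : ‖T (w + θ • v)‖^2
          = ‖T‖^2 + 2*θ*⟪T w, T v⟫ + θ^2*‖T v‖^2 := by
        rw [map_add, map_smul, norm_add_sq_real, real_inner_smul_right, norm_smul,
          Real.norm_eq_abs, mul_pow, sq_abs, hTw]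
        ring
      have h4 : 0 ≤ θ^2*‖T v‖^2 := by positivity
      rw [h2] at h1'
      rw [h3] at h1'
      linarith
    have hz : ⟪T w, T v⟫ = 0 := by
      set a := ⟪T w, T v⟫ with hadef
      set C := ‖T‖^2 * ‖v‖^2 with hCdef
      have hC0 : 0 ≤ C := by positivity
      have hC1 : (0:ℝ) < C + 1 := by linarith
      have hkey := key (a / (C+1))
      have ha : a = (a/(C+1)) * (C+1) := (div_mul_cancel₀ a hC1.ne').symm
      set θ := a / (C+1) with hθdef
      rw [ha] at hkey ⊢
      have hθ2 : θ^2 ≤ 0 := by nlinarith [hkey, hC0, sq_nonneg θ]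
      have hθ0 : θ = 0 := by
        have h5 := le_antisymm hθ2 (sq_nonneg θ)
        exact pow_eq_zero_iff two_ne_zero |>.mp h5
      rw [hθ0, zero_mul]
    calc ⟪T u, T v⟫ = ⟪T (‖u‖ • w), T v⟫ := by rw [← hu_eq]
      _ = ‖u‖ * ⟪T w, T v⟫ := by rw [map_smul, real_inner_smul_left]
      _ = 0 := by rw [hz, mul_zero]
  -- suppose the conclusion fails
  by_contra hcon
  push_neg at hcon
  have hSf : ∀ x : H, x ∈ H₀ → ‖x‖ = 1 → ε*‖T‖*‖A‖ < |⟪T x, A x⟫| :=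
    fun x hx h1 => hcon x h1 (hattain x hx h1)
  have hc : 0 ≤ ε*‖T‖*‖A‖ := by positivity
  -- either the inner product is everywhere < -c or everywhere > c on the sphere of H₀
  have hdich : (∀ x : H, x ∈ H₀ → ‖x‖ = 1 → ⟪T x, A x⟫ < -(ε*‖T‖*‖A‖)) ∨
      (∀ x : H, x ∈ H₀ → ‖x‖ = 1 → ε*‖T‖*‖A‖ < ⟪T x, A x⟫) := by
    by_contra hd
    push_neg at hd
    obtain ⟨⟨p, hpH, hp1, hpf⟩, ⟨q, hqH, hq1, hqf⟩⟩ := hd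
    have hfp : ε*‖T‖*‖A‖ < ⟪T p, A p⟫ := by
      by_contra h'
      push_neg at h'
      have : |⟪T p, A p⟫| ≤ ε*‖T‖*‖A‖ := abs_le.mpr ⟨by linarith, h'⟩
      linarith [hSf p hpH hp1]
    have hfq : ⟪T q, A q⟫ < -(ε*‖T‖*‖A‖) := by
      by_contra h'
      push_neg at h'
      have : |⟪T q, A q⟫| ≤ ε*‖T‖*‖A‖ := abs_le.mpr ⟨by linarith, hqf⟩
      linarith [hSf q hqH hq1]
    have hqp : q ≠ -p := by
      intro hq
      rw [hq] at hfq
      have he : ⟪T (-p), A (-p)⟫ = ⟪T p, A p⟫ := by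
        rw [map_neg, map_neg, inner_neg_neg]
      rw [he] at hfq
      linarith
    have hfc : Continuous fun x : H => ⟪T x, A x⟫ := T.continuous.inner A.continuous
    have hm0 : ∀ t ∈ Set.Icc (0:ℝ) 1, (1-t) • p + t • q ≠ 0 := by
      rintro t ⟨ht0, ht1⟩ hzero
      have h1 : (1-t) • p = -(t • q) := by
        rw [← add_eq_zero_iff_eq_neg]
        exact hzero
      have h2 : |1-t| = |t| := by
        have h3 := congrArg norm h1
        simp only [norm_smul, norm_neg, hp1, hq1, Real.norm_eq_abs, mul_one] at h3
        exact h3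
      rw [abs_of_nonneg (by linarith), abs_of_nonneg ht0] at h2
      have ht : t = 1/2 := by linarith
      rw [ht] at h1
      have h4 : ((1:ℝ) - 1/2) • p = (1/2 : ℝ) • (-q) := by
        rw [smul_neg]
        exact h1
      have h5 : p = -q := by
        have h6 : ((1:ℝ)/2) • p = (1/2 : ℝ) • (-q) := by
          norm_num at h4 ⊢
          exact h4
        exact smul_right_injective H (by norm_num : (1/2 : ℝ) ≠ 0) h6
      apply hqp
      rw [h5, neg_neg]
    have hmc : Continuous fun t : ℝ => (1-t) • p + t • q := by
      continuity
    have hγc : ContinuousOn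
        (fun t : ℝ => ⟪T ((‖(1-t) • p + t • q‖)⁻¹ • ((1-t) • p + t • q)),
          A ((‖(1-t) • p + t • q‖)⁻¹ • ((1-t) • p + t • q))⟫) (Set.Icc 0 1) := by
      apply hfc.comp_continuousOn
      apply ContinuousOn.smul
      · exact (hmc.norm.continuousOn).inv₀ fun t ht => norm_ne_zero_iff.mpr (hm0 t ht)
      · exact hmc.continuousOn
    set g : ℝ → ℝ := fun t => ⟪T ((‖(1-t) • p + t • q‖)⁻¹ • ((1-t) • p + t • q)),
      A ((‖(1-t) • p + t • q‖)⁻¹ • ((1-t) • p + t • q))⟫ with hgdef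
    have hγS : ∀ t ∈ Set.Icc (0:ℝ) 1,
        ((‖(1-t) • p + t • q‖)⁻¹ • ((1-t) • p + t • q)) ∈ H₀ ∧
        ‖(‖(1-t) • p + t • q‖)⁻¹ • ((1-t) • p + t • q)‖ = 1 := by
      intro t ht
      constructor
      · exact H₀.smul_mem _ (H₀.add_mem (H₀.smul_mem _ hpH) (H₀.smul_mem _ hqH))
      · rw [norm_smul, norm_inv, norm_norm,
          inv_mul_cancel₀ (norm_ne_zero_iff.mpr (hm0 t ht))]
    have hg0 : g 0 = ⟪T p, A p⟫ := by
      have e1 : (1-(0:ℝ)) • p + (0:ℝ) • q = p := by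
        rw [sub_zero, one_smul, zero_smul, add_zero]
      rw [hgdef]
      simp only [e1, hp1]
      norm_num
    have hg1 : g 1 = ⟪T q, A q⟫ := by
      have e1 : (1-(1:ℝ)) • p + (1:ℝ) • q = q := by
        rw [sub_self, zero_smul, one_smul, zero_add]
      rw [hgdef]
      simp only [e1, hq1]
      norm_num
    have h0mem : (0:ℝ) ∈ Set.Icc (g 1) (g 0) := by
      constructor
      · rw [hg1]; linarith
      · rw [hg0]; linarith
    obtain ⟨t, htI, htg⟩ := intermediate_value_Icc' (by norm_num : (0:ℝ) ≤ 1) hγc h0mem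
    have h7 := hSf _ (hγS t htI).1 (hγS t htI).2
    have h8 : g t = 0 := htg
    simp only [hgdef] at h8
    rw [h8] at h7
    simp only [abs_zero] at h7
    linarith
  rcases hdich with hleft | hright
  · exact key_contra T A H₀ k' hk'0 hk'N hk' hortho ε hε0 horth hne hleft
  · have horth' : ∀ l : ℝ, ‖T + l • (-A)‖ ^ 2 ≥ ‖T‖ ^ 2 - 2 * ε * ‖T‖ * ‖l • (-A)‖ := by
      intro l
      have e1 : l • (-A) = (-l) • A := by rw [smul_neg, neg_smul]
      rw [e1]
      exact horth (-l)
    have h' : ∀ x : H, x ∈ H₀ → ‖x‖ = 1 → ⟪T x, (-A) x⟫ < -(ε * ‖T‖ * ‖-A‖) := by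
      intro x hx h1
      have h2 := hright x hx h1
      simp only [ContinuousLinearMap.neg_apply, inner_neg_right, norm_neg]
      linarith
    exact key_contra T (-A) H₀ k' hk'0 hk'N hk' hortho ε hε0 horth' hne h'
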